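/- arXiv:2202.06217 — 5 statements merged into one kernel-verified Lean document; each statement's English description precedes it below -/
import Mathlib

section
/- Let Q be a unital quantale and (X, α) an object of Set(Q). The map m : Q^{Q^X} → Q^X given by m(Λ)(x) = ⋁_{γ ∈ Q^X} Λ(γ) ⊗ γ(x) satisfies α↓↓(Λ) = α↓(m(Λ)) for all Λ, where α↓(γ) = ⋀_x α(x) ⧸ γ(x) and α↓↓ = (α↓)↓. In particular m is a Goguen map (Q^{Q^X}, α↓↓) → (Q^X, α↓). -/
/-- Left implication in a unital quantale: `ldd r q = r ⧸ q`. -/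
def ldd {Q : Type*} [Monoid Q] [CompleteLattice Q] (r q : Q) : Q := sSup {p | p * q ≤ r}

/-- Right implication in a unital quantale: `rdd p r = p ⧹ r`. -/
def rdd {Q : Type*} [Monoid Q] [CompleteLattice Q] (p r : Q) : Q := sSup {q | p * q ≤ r}

/-- Image of a `Q`-valued map along `f`. -/
noncomputable def fim {X Y : Type*} {Q : Type*} [CompleteLattice Q] (f : X → Y) (α : X → Q) :
    Y → Q := fun y => ⨆ x ∈ f ⁻¹' {y}, α x

lemma le_ldd_iff {Q : Type*} [Monoid Q] [CompleteLattice Q] [IsQuantale Q] {p r q : Q} :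
    p ≤ ldd r q ↔ p * q ≤ r :=
  Quantale.leftMulResiduation_le_iff_mul_le

theorem mult_map_goguen {X : Type*} {Q : Type*} [Monoid Q] [CompleteLattice Q]
    [IsQuantale Q] (α : X → Q) (Λ : (X → Q) → Q) :
    (⨅ γ : X → Q, ldd (⨅ x, ldd (α x) (γ x)) (Λ γ)) =
      ⨅ x, ldd (α x) (⨆ γ : X → Q, Λ γ * γ x) := by
  apply eq_of_forall_le_iff
  intro b
  simp only [le_iInf_iff, le_ldd_iff, Quantale.mul_iSup_distrib, iSup_le_iff, ← mul_assoc]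
  exact forall_comm
end

section
/- Let Q be a unital quantale, and let (X, α), (Y, β) be Q-fuzzy sets. A function f : X → Q^Y is a Goguen map (X, α) → (Q^Y, β↑) if and only if its transpose g : Y → Q^X, g(y)(x) = f(x)(y), is a Goguen map (Y, β) → (Q^X, α↑†), where β↑(λ) = ⋀_y λ(y) ⧸ β(y) and α↑†(γ) = ⋀_x α(x) ⧹ γ(x). -/
lemma ldd_adj {Q : Type*} [Monoid Q] [CompleteLattice Q] [IsQuantale Q] {p q r : Q} :
    p ≤ ldd r q ↔ p * q ≤ r :=
  Quantale.leftMulResiduation_le_iff_mul_le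

lemma rdd_adj {Q : Type*} [Monoid Q] [CompleteLattice Q] [IsQuantale Q] {p q r : Q} :
    q ≤ rdd p r ↔ p * q ≤ r :=
  Quantale.rightMulResiduation_le_iff_mul_le

theorem goguen_transpose_iff {X Y : Type*} {Q : Type*} [Monoid Q] [CompleteLattice Q]
    [IsQuantale Q] (α : X → Q) (β : Y → Q) (f : X → Y → Q) :
    (∀ x, α x ≤ ⨅ y, ldd (f x y) (β y)) ↔ (∀ y, β y ≤ ⨅ x, rdd (α x) (f x y)) := by
  simp only [le_iInf_iff, ldd_adj, rdd_adj]
  exact ⟨fun h y x => h x y, fun h x y => h y x⟩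
end

section
/- Let Q be a unital quantale, (X, α) a Q-fuzzy set. The unit map η : X → Q^{Q^X}, η(x)(γ) = γ(x), satisfies the Goguen condition α(x) ≤ (α↑†)↑(η(x)) for all x ∈ X, where (α↑†)↑(Λ) = ⋀_{γ ∈ Q^X} Λ(γ) ⧸ (⋀_{x} α(x) ⧹ γ(x)). -/
theorem eta_goguen {X : Type*} {Q : Type*} [Monoid Q] [CompleteLattice Q]
    [IsQuantale Q] (α : X → Q) (x : X) :
    α x ≤ ⨅ γ : X → Q, ldd (γ x) (⨅ x', rdd (α x') (γ x')) := by
  refine le_iInf fun γ => le_sSup ?_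
  have h1 : (⨅ x', rdd (α x') (γ x')) ≤ rdd (α x) (γ x) := iInf_le _ x
  have h2 : α x * rdd (α x) (γ x) ≤ γ x := by
    rw [rdd, IsQuantale.mul_sSup_distrib]
    exact iSup₂_le fun q hq => hq
  calc α x * (⨅ x', rdd (α x') (γ x')) ≤ α x * rdd (α x) (γ x) := by
        exact mul_le_mul_right h1 _
    _ ≤ γ x := h2
end

section
/- Let Q be a unital quantale and X a set. For each λ : X → Q, the map j_X(λ) : Q^X → Q defined by j_X(λ)(γ) = ⋀_x γ(x) ⧸ λ(x) determines an injective map j_X : Q^X → Q^{Q^X}, provided Q has at least two elements. -/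
lemma one_le_ldd_iff {Q : Type*} [Monoid Q] [CompleteLattice Q] [IsQuantale Q] (r q : Q) :
    1 ≤ ldd r q ↔ q ≤ r := by
  constructor
  · intro h
    have h2 : ldd r q * q ≤ r := by
      rw [ldd, sSup_mul_distrib]
      exact iSup₂_le fun p hp => hp
    calc q = 1 * q := (one_mul q).symm
    _ ≤ ldd r q * q := mul_le_mul_left h q
    _ ≤ r := h2
  · intro h
    exact le_sSup (by simpa using h)

theorem j_injective {X : Type*} {Q : Type*} [Monoid Q] [CompleteLattice Q]
    [IsQuantale Q] [Nontrivial Q] :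
    Function.Injective (fun (lam : X → Q) => fun (γ : X → Q) => ⨅ x, ldd (γ x) (lam x)) := by
  intro a b hab
  have key : ∀ (u v : X → Q), (fun γ : X → Q => ⨅ x, ldd (γ x) (u x)) = (fun γ : X → Q => ⨅ x, ldd (γ x) (v x)) →
      ∀ x, v x ≤ u x := by
    intro u v h x
    have h1 : (1 : Q) ≤ ⨅ x, ldd (u x) (u x) :=
      le_iInf fun x => (one_le_ldd_iff _ _).mpr le_rfl
    have h2 : (1 : Q) ≤ ⨅ x, ldd (u x) (v x) := (congrFun h u) ▸ h1
    exact (one_le_ldd_iff _ _).mp (le_trans h2 (iInf_le _ x))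
  funext x
  exact le_antisymm (key b a hab.symm x) (key a b hab x)
end

section
/- Let Q be a unital quantale and X a set. If 𝔽 is a Q-filter on the set F_Q(X) of all Q-filters on X, then the map σ(𝔽) : Q^X → Q defined by σ(𝔽)(λ) = 𝔽(λ̂), where λ̂(F) = F(λ), is a Q-filter on X. -/
/-- A \`Q\`-filter on a set \`X\`. -/
structure IsQFilter {X : Type*} {Q : Type*} [Monoid Q] [CompleteLattice Q]
    (F : (X → Q) → Q) : Prop where
  f1 : (1 : Q) ≤ F (fun _ => 1)
  f2 : ∀ lam γ : X → Q, F lam ⊓ F γ ≤ F (lam ⊓ γ)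
  f3 : ∀ lam γ : X → Q, (⨅ x, ldd (γ x) (lam x)) ≤ ldd (F γ) (F lam)
  f4 : ∀ r : Q, F (fun _ => r) ≤ r

lemma ldd_mul_le {Q : Type*} [Monoid Q] [CompleteLattice Q] [IsQuantale Q] (r q : Q) :
    ldd r q * q ≤ r := by
  rw [ldd, sSup_mul_distrib]
  exact iSup₂_le fun p hp => hp

lemma IsQFilter.mono {X : Type*} {Q : Type*} [Monoid Q] [CompleteLattice Q] [IsQuantale Q]
    {F : (X → Q) → Q} (hF : IsQFilter F) {lam γ : X → Q} (h : lam ≤ γ) : F lam ≤ F γ := by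
  have h1 : (1 : Q) ≤ ⨅ x, ldd (γ x) (lam x) :=
    le_iInf fun x => le_ldd_iff.2 (by simpa using h x)
  have := le_trans h1 (hF.f3 lam γ)
  calc F lam = 1 * F lam := (one_mul _).symm
    _ ≤ ldd (F γ) (F lam) * F lam := mul_le_mul_left this _
    _ ≤ F γ := ldd_mul_le _ _

theorem diagonal_QFilter {X : Type*} {Q : Type*} [Monoid Q] [CompleteLattice Q]
    [IsQuantale Q]
    (FF : ({F : (X → Q) → Q // IsQFilter F} → Q) → Q) (hFF : IsQFilter FF) :
    IsQFilter (fun lam : X → Q => FF (fun F => F.1 lam)) := by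
  constructor
  · exact le_trans hFF.f1 (hFF.mono fun F => F.2.f1)
  · intro lam γ
    refine le_trans (hFF.f2 _ _) (hFF.mono fun F => ?_)
    exact F.2.f2 lam γ
  · intro lam γ
    refine le_trans ?_ (hFF.f3 (fun F => F.1 lam) (fun F => F.1 γ))
    exact le_iInf fun F => le_trans (le_iInf fun x => iInf_le _ x) (F.2.f3 lam γ)
  · intro r
    exact le_trans (hFF.mono fun F => F.2.f4 r) (hFF.f4 r)
end
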